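/- For every prime p and every integer e ≥ 1, there exists a polynomial H with integer coefficients of degree at most (e−1)(p−1)+1 such that for all integers z₀, z₁ with 0 ≤ z₀ < p, one has H(z₀ + p·z₁) ≡ z₀ (mod p^e). -/

import Mathlib

open Finset Polynomial

/-- Iterated forward difference operator. -/
private def dd : ℕ → (ℤ → ℤ) → ℤ → ℤ
  | 0, g => g
  | (n+1), g => fun x => dd n g (x+1) - dd n g x

private lemma dd_zero (g : ℤ → ℤ) : dd 0 g = g := rfl

private lemma dd_succ (n : ℕ) (g : ℤ → ℤ) (x : ℤ) :
    dd (n+1) g x = dd n g (x+1) - dd n g x := rfl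

private lemma dd_add (m n : ℕ) (g : ℤ → ℤ) : dd (m + n) g = dd m (dd n g) := by
  induction m with
  | zero => simp [dd_zero]
  | succ m ih =>
      funext x
      show dd (m + 1 + n) g x = dd (m+1) (dd n g) x
      rw [show m + 1 + n = (m + n) + 1 by ring, dd_succ, dd_succ, ih]

/-- Divisibility of values is preserved by differences. -/
private lemma dd_dvd (c : ℤ) (g : ℤ → ℤ) (h : ∀ x, c ∣ g x) :
    ∀ n x, c ∣ dd n g x := by
  intro n
  induction n with
  | zero => exact h
  | succ n ih => intro x; rw [dd_succ]; exact dvd_sub (ih _) (ih _)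

/-- Newton's forward difference formula. -/
private lemma newton (g : ℤ → ℤ) (m : ℕ) : ∀ x : ℤ,
    g (x + m) = ∑ n ∈ range (m+1), (m.choose n : ℤ) * dd n g x := by
  induction m with
  | zero => intro x; simp [dd_zero]
  | succ m ih =>
      intro x
      have h1 : g (x + (m+1 : ℕ)) = g ((x + 1) + m) := by push_cast; ring_nf
      rw [h1, ih (x+1)]
      have key : ∀ n, dd n g (x+1) = dd n g x + dd (n+1) g x := by
        intro n; rw [dd_succ]; ring
      calc ∑ n ∈ range (m+1), (m.choose n : ℤ) * dd n g (x+1)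
          = ∑ n ∈ range (m+1), ((m.choose n : ℤ) * dd n g x
              + (m.choose n : ℤ) * dd (n+1) g x) := by
            refine Finset.sum_congr rfl fun n _ => ?_
            rw [key n]; ring
        _ = ∑ n ∈ range (m+1), (m.choose n : ℤ) * dd n g x
              + ∑ n ∈ range (m+1), (m.choose n : ℤ) * dd (n+1) g x := by
            rw [Finset.sum_add_distrib]
        _ = ∑ n ∈ range (m+1+1), (m.choose n : ℤ) * dd n g x
              + ∑ n ∈ range (m+1), (m.choose n : ℤ) * dd (n+1) g x := by
            rw [Finset.sum_range_succ (fun n => (m.choose n : ℤ) * dd n g x) (m+1)]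
            simp [Nat.choose_eq_zero_of_lt (Nat.lt_succ_self m)]
        _ = ∑ n ∈ range (m+1+1), ((m+1).choose n : ℤ) * dd n g x := by
            rw [Finset.sum_range_succ' (fun n => (m.choose n : ℤ) * dd n g x),
                Finset.sum_range_succ' (fun n => ((m+1).choose n : ℤ) * dd n g x)]
            simp only [Nat.choose_zero_right, Nat.cast_one]
            rw [add_right_comm, ← Finset.sum_add_distrib]
            congr 1
            refine Finset.sum_congr rfl fun n _ => ?_
            rw [Nat.choose_succ_succ, Nat.cast_add]
            ring

section Main

variable (p : ℕ)

/-- The lowest-digit function. -/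
private def ff : ℤ → ℤ := fun z => z % (p : ℤ)

private lemma ff_period (hp : 0 < p) (x : ℤ) : ff p (x + p) = ff p x := by
  unfold ff
  rw [show x + (p:ℤ) = x + (p:ℤ) * 1 by ring, Int.add_mul_emod_self_left]

/-- The key operator identity coming from periodicity. -/
private lemma dd_p_eq (hp : 0 < p) : ∀ (m : ℕ) (x : ℤ),
    dd (p + m) (ff p) x = -∑ k ∈ Ico 1 p, (p.choose k : ℤ) * dd (k + m) (ff p) x := by
  intro m
  induction m with
  | zero =>
      intro x
      have hN := newton (ff p) p x
      rw [ff_period p hp x] at hN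
      have h0 : ∑ n ∈ range (p+1), (p.choose n : ℤ) * dd n (ff p) x
          = ff p x + ∑ n ∈ Ico 1 (p+1), (p.choose n : ℤ) * dd n (ff p) x := by
        rw [Finset.range_eq_Ico, ← Finset.sum_Ico_consecutive _ (Nat.zero_le 1) (by omega)]
        simp [dd_zero]
      have h1 : ∑ n ∈ Ico 1 (p+1), (p.choose n : ℤ) * dd n (ff p) x
          = ∑ n ∈ Ico 1 p, (p.choose n : ℤ) * dd n (ff p) x + dd p (ff p) x := by
        rw [Finset.sum_Ico_succ_top (by omega)]
        simp
      have : ff p x = ff p x + (∑ n ∈ Ico 1 p, (p.choose n : ℤ) * dd n (ff p) x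
          + dd p (ff p) x) := by rw [← h1, ← h0, hN]
      have h2 : dd (p + 0) (ff p) x = dd p (ff p) x := by norm_num
      rw [h2]
      have h3 : ∀ k, k + 0 = k := fun k => rfl
      simp only [h3]
      linarith
  | succ m ih =>
      intro x
      have h2 : p + (m + 1) = (p + m) + 1 := by ring
      rw [h2, dd_succ, ih (x+1), ih x]
      have hk : ∀ k, (p.choose k : ℤ) * dd (k+(m+1)) (ff p) x
          = (p.choose k : ℤ) * dd (k+m) (ff p) (x+1)
            - (p.choose k : ℤ) * dd (k+m) (ff p) x := by
        intro k
        rw [show k + (m+1) = (k+m)+1 by ring, dd_succ]; ring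
      simp only [hk]
      rw [Finset.sum_sub_distrib]
      ring


private lemma dd_two_dvd (hp : 0 < p) : ∀ n, 2 ≤ n → ∀ x, (p:ℤ) ∣ dd n (ff p) x := by
  intro n hn x
  obtain ⟨m, rfl⟩ : ∃ m, n = m + 2 := ⟨n - 2, by omega⟩
  rw [dd_add m 2]
  refine dd_dvd _ _ (fun y => ?_) m x
  have h2 : dd 2 (ff p) y
      = (p:ℤ) * (-( (y+1+1)/p) + 2*((y+1)/p) - y/p) := by
    show ff p (y+1+1) - ff p (y+1) - (ff p (y+1) - ff p y) = _
    simp only [ff, Int.emod_def]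
    ring
  rw [h2]
  exact Dvd.intro _ rfl

private lemma dd_pow_dvd (hp : p.Prime) : ∀ (j n : ℕ), j * (p-1) + 2 ≤ n →
    ∀ x, (p:ℤ)^(j+1) ∣ dd n (ff p) x := by
  intro j
  induction j with
  | zero => intro n hn x; rw [pow_one]; exact dd_two_dvd p hp.pos n (by omega) x
  | succ j ih =>
      intro n hn x
      have hp2 := hp.two_le
      have hexp : (j+1)*(p-1) = j*(p-1) + (p-1) := by ring
      obtain ⟨m, rfl, hm⟩ : ∃ m, n = p + m ∧ j*(p-1)+1 ≤ m :=
        ⟨n - p, by omega, by omega⟩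
      rw [dd_p_eq p hp.pos m x, dvd_neg]
      refine Finset.dvd_sum fun k hk => ?_
      rw [Finset.mem_Ico] at hk
      have h1 : (p:ℤ) ∣ (p.choose k : ℤ) :=
        Int.natCast_dvd_natCast.mpr (hp.dvd_choose_self (by omega) hk.2)
      have h2 : (p:ℤ)^(j+1) ∣ dd (k+m) (ff p) x := ih (k+m) (by omega) x
      have h3 : (p:ℤ)^(j+1+1) = p * p^(j+1) := by ring
      rw [h3]
      exact mul_dvd_mul h1 h2

private lemma digitsum_pos (hp : p.Prime) {n : ℕ} (hn : n ≠ 0) :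
    1 ≤ (p.digits n).sum := by
  by_contra h
  have hs : (p.digits n).sum = 0 := by omega
  have hne : p.digits n ≠ [] := Nat.digits_ne_nil_iff_ne_zero.mpr hn
  have hlast := Nat.getLast_digit_ne_zero p hn
  have hmem : (p.digits n).getLast hne ∈ p.digits n := List.getLast_mem hne
  have := (List.sum_eq_zero_iff.mp hs) _ hmem
  exact hlast this

private lemma coeff_exists (hp : p.Prime) (e : ℕ) (n : ℕ) :
    ∃ c : ℤ, (p:ℤ)^e ∣ c * (n.factorial : ℤ) - dd n (ff p) 0 := by
  haveI : Fact p.Prime := ⟨hp⟩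
  have hp2 := hp.two_le
  set a : ℤ := dd n (ff p) 0 with ha
  set v : ℕ := (n.factorial).factorization p with hv
  set u : ℕ := n.factorial / p^v with hu
  have hfac : p^v * u = n.factorial := Nat.ordProj_mul_ordCompl_eq_self _ p
  have hund : ¬ p ∣ u := Nat.not_dvd_ordCompl hp n.factorial_ne_zero
  -- Bezout inverse of u modulo p^e
  have hcop : Nat.Coprime u (p^e) :=
    ((hp.coprime_iff_not_dvd.mpr hund).symm).pow_right e
  have hicop : IsCoprime (u:ℤ) ((p:ℤ)^e) := by
    rw [Int.isCoprime_iff_gcd_eq_one]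
    have : ((p:ℤ))^e = ((p^e : ℕ) : ℤ) := by push_cast; ring
    rw [this, Int.gcd_natCast_natCast]
    exact hcop
  obtain ⟨α, β, hαβ⟩ := hicop
  -- p^v divides a
  have hpva : (p:ℤ)^v ∣ a := by
    rcases Nat.eq_zero_or_pos v with hv0 | hv1
    · rw [hv0, pow_zero]; exact one_dvd _
    · have hleg : (p - 1) * v = n - (p.digits n).sum := by
        rw [hv, Nat.factorization_def _ hp]
        exact sub_one_mul_padicValNat_factorial n
      have hnne : n ≠ 0 := by
        intro h0
        rw [h0] at hv
        simp [Nat.factorial] at hv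
        omega
      have hds := digitsum_pos p hp hnne
      have hA : (p-1)*v = (v-1)*(p-1) + (p-1) := by
        have h1 : v - 1 + 1 = v := by omega
        calc (p-1)*v = (p-1)*((v-1)+1) := by rw [h1]
          _ = (v-1)*(p-1) + (p-1) := by ring
      have hle : (v-1)*(p-1) + 2 ≤ n := by
        have hsle := Nat.digit_sum_le p n
        omega
      have := dd_pow_dvd p hp (v-1) n hle 0
      rwa [show v - 1 + 1 = v by omega] at this
  refine ⟨(a / (p:ℤ)^v) * α, ?_⟩
  have hfacZ : ((n.factorial : ℕ) : ℤ) = (p:ℤ)^v * (u:ℤ) := by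
    rw [← hfac]; push_cast; ring
  have hcancel : a / (p:ℤ)^v * (p:ℤ)^v = a := Int.ediv_mul_cancel hpva
  have hkey : (a / (p:ℤ)^v) * α * (n.factorial : ℤ) - a = a * (-β) * (p:ℤ)^e := by
    rw [hfacZ]
    have : a / (p:ℤ)^v * α * ((p:ℤ)^v * u) = a / (p:ℤ)^v * (p:ℤ)^v * (α * u) := by ring
    rw [this, hcancel]
    have hαu : (α : ℤ) * u = 1 - β * (p:ℤ)^e := by linarith [hαβ]
    rw [hαu]; ring
  rw [hkey]
  exact Dvd.intro_left _ rfl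

end Main

/-- Lowest-digit-extraction polynomial of degree at most (e-1)(p-1)+1 (Chen–Han). -/
theorem lowest_digit_extraction_CH (p : ℕ) (hp : p.Prime) (e : ℕ) (he : 1 ≤ e) :
    ∃ H : Polynomial ℤ, H.natDegree ≤ (e - 1) * (p - 1) + 1 ∧
      ∀ z₀ z₁ : ℤ, 0 ≤ z₀ → z₀ < (p : ℤ) →
        H.eval (z₀ + (p : ℤ) * z₁) ≡ z₀ [ZMOD (p : ℤ) ^ e] := by
  have hp2 := hp.two_le
  set D := (e - 1) * (p - 1) + 1 with hD
  choose cc hcc using coeff_exists p hp e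
  set H : Polynomial ℤ := ∑ n ∈ range (D+1), Polynomial.C (cc n) * descPochhammer ℤ n
    with hH
  have key : ∀ m : ℕ, (p:ℤ)^e ∣ H.eval (m:ℤ) - ff p (m:ℤ) := by
    intro m
    have hev : H.eval (m:ℤ) = ∑ n ∈ range (D+1), cc n * (m.descFactorial n : ℤ) := by
      rw [hH, Polynomial.eval_finset_sum]
      refine Finset.sum_congr rfl fun n _ => ?_
      rw [Polynomial.eval_mul, Polynomial.eval_C, descPochhammer_eval_eq_descFactorial]
    have hnewton : ff p (m:ℤ) = ∑ n ∈ range (m+1), (m.choose n : ℤ) * dd n (ff p) 0 := by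
      have := newton (ff p) m 0; rwa [zero_add] at this
    set M := max m D with hM
    -- step 1
    have s1 : (p:ℤ)^e ∣ ∑ n ∈ range (D+1), cc n * (m.descFactorial n : ℤ)
        - ∑ n ∈ range (D+1), (m.choose n : ℤ) * dd n (ff p) 0 := by
      rw [← Finset.sum_sub_distrib]
      refine Finset.dvd_sum fun n _ => ?_
      have heq : cc n * (m.descFactorial n : ℤ) - (m.choose n : ℤ) * dd n (ff p) 0
          = (cc n * (n.factorial : ℤ) - dd n (ff p) 0) * (m.choose n : ℤ) := by
        rw [Nat.descFactorial_eq_factorial_mul_choose]; push_cast; ring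
      rw [heq]
      exact Dvd.dvd.mul_right (hcc n) _
    -- step 2
    have hsplit : ∑ n ∈ range (M+1), (m.choose n : ℤ) * dd n (ff p) 0
        = ∑ n ∈ range (D+1), (m.choose n : ℤ) * dd n (ff p) 0
          + ∑ n ∈ Ico (D+1) (M+1), (m.choose n : ℤ) * dd n (ff p) 0 := by
      simp only [Finset.range_eq_Ico]
      exact (Finset.sum_Ico_consecutive _ (Nat.zero_le _)
        (Nat.succ_le_succ (le_max_right m D))).symm
    have s2 : (p:ℤ)^e ∣ ∑ n ∈ range (D+1), (m.choose n : ℤ) * dd n (ff p) 0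
        - ∑ n ∈ range (M+1), (m.choose n : ℤ) * dd n (ff p) 0 := by
      rw [hsplit]
      have : ∀ n ∈ Ico (D+1) (M+1), (p:ℤ)^e ∣ (m.choose n : ℤ) * dd n (ff p) 0 := by
        intro n hn
        rw [Finset.mem_Ico] at hn
        have hle : (e-1)*(p-1) + 2 ≤ n := by omega
        have := dd_pow_dvd p hp (e-1) n hle 0
        rw [show e - 1 + 1 = e by omega] at this
        exact Dvd.dvd.mul_left this _
      have hdvd := Finset.dvd_sum this
      have harith : ∀ A B : ℤ, A - (A + B) = -B := fun A B => by ring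
      rw [harith]
      exact dvd_neg.mpr hdvd
    -- step 3
    have s3 : ∑ n ∈ range (M+1), (m.choose n : ℤ) * dd n (ff p) 0 = ff p (m:ℤ) := by
      rw [hnewton]
      rcases le_or_gt M m with h | h
      · have : M = m := le_antisymm h (le_max_left m D)
        rw [this]
      · have hmm : m + 1 ≤ M + 1 := by omega
        simp only [Finset.range_eq_Ico]
        rw [← Finset.sum_Ico_consecutive _ (Nat.zero_le (m+1)) hmm]
        have : ∑ n ∈ Ico (m+1) (M+1), (m.choose n : ℤ) * dd n (ff p) 0 = 0 := by
          refine Finset.sum_eq_zero fun n hn => ?_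
          rw [Finset.mem_Ico] at hn
          rw [Nat.choose_eq_zero_of_lt (by omega)]
          simp
        rw [this, add_zero]
    have hEq : H.eval (m:ℤ) - ff p (m:ℤ)
        = (∑ n ∈ range (D+1), cc n * (m.descFactorial n : ℤ)
            - ∑ n ∈ range (D+1), (m.choose n : ℤ) * dd n (ff p) 0)
          + (∑ n ∈ range (D+1), (m.choose n : ℤ) * dd n (ff p) 0
            - ∑ n ∈ range (M+1), (m.choose n : ℤ) * dd n (ff p) 0) := by
      rw [hev, ← s3]; ring
    rw [hEq]
    exact dvd_add s1 s2
  refine ⟨H, ?_, ?_⟩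
  · refine natDegree_sum_le_of_forall_le _ _ fun n hn => ?_
    refine le_trans (natDegree_C_mul_le _ _) ?_
    rw [descPochhammer_natDegree]
    exact Nat.lt_succ_iff.mp (Finset.mem_range.mp hn)
  · intro z₀ z₁ h0 h1
    set z := z₀ + (p:ℤ) * z₁ with hz
    have hppos : (0:ℤ) < (p:ℤ) := by exact_mod_cast hp.pos
    have hNpos : (0:ℤ) < (p:ℤ)^e := pow_pos hppos e
    set m := (z % (p:ℤ)^e).toNat with hm
    have hmz : (m:ℤ) = z % (p:ℤ)^e :=
      Int.toNat_of_nonneg (Int.emod_nonneg z (ne_of_gt hNpos))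
    have hdvd1 : (p:ℤ)^e ∣ z - m := by
      rw [hmz, Int.emod_def]
      exact ⟨z / (p:ℤ)^e, by ring⟩
    have heval : (p:ℤ)^e ∣ H.eval z - H.eval (m:ℤ) :=
      dvd_trans hdvd1 (sub_dvd_eval_sub z (m:ℤ) H)
    have hffm : ff p (m:ℤ) = z₀ := by
      have hpe : (p:ℤ) ∣ (p:ℤ)^e := dvd_pow_self _ (by omega)
      show (m:ℤ) % p = z₀
      rw [hmz, Int.emod_emod_of_dvd z hpe, hz, Int.add_mul_emod_self_left,
        Int.emod_eq_of_lt h0 h1]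
    rw [Int.modEq_iff_dvd]
    have hthis := dvd_add heval (key m)
    rw [hffm] at hthis
    have harith : H.eval z - H.eval (m:ℤ) + (H.eval (m:ℤ) - z₀) = H.eval z - z₀ := by ring
    rw [harith] at hthis
    rw [show z₀ - H.eval z = -(H.eval z - z₀) by ring]
    exact dvd_neg.mpr hthis
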